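/- For any integer u ≥ 2 and integer n ≥ 1, the number of Schreier sets F (i.e., min F ≥ |F|) contained in the set of the first n positive integers not divisible by u, with the n-th such integer ⌊(un−1)/(u−1)⌋ belonging to F, equals Σ_{k=1}^{⌊((n+1)u−1)/(2u−1)⌋} C(n − k + ⌊(k−1)/u⌋, k − 1). -/

import Mathlib

/-- The set of the first `n` positive integers not divisible by `u`. -/
def Gset (u n : ℕ) : Finset ℕ := (Finset.Icc 1 n).image fun k => (u * k - 1) / (u - 1)

/-- The Schreier subsets of `Gset u n` containing its largest element `⌊(un-1)/(u-1)⌋`. -/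
def Dset (u n : ℕ) : Finset (Finset ℕ) :=
  (Gset u n).powerset.filter fun F => (u * n - 1) / (u - 1) ∈ F ∧ ∀ x ∈ F, F.card ≤ x

namespace CardDsetAux

lemma gval {u : ℕ} (hu : 2 ≤ u) (j : ℕ) :
    (u * j - 1) / (u - 1) = j + (j - 1) / (u - 1) := by
  rcases j with _ | m
  · simp
  · have h1 : (m + 1) * (u - 1) + (m + 1) * 1 = (m + 1) * u := by
      rw [← Nat.mul_add]; congr 1; omega
    have hc : (m + 1) * u = u * (m + 1) := Nat.mul_comm _ _
    have h2 : u * (m + 1) - 1 = m + (m + 1) * (u - 1) := by omega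
    rw [h2, Nat.add_mul_div_right _ _ (by omega : 0 < u - 1)]
    rw [Nat.add_sub_cancel, Nat.add_comm]

lemma gmono {u : ℕ} (hu : 2 ≤ u) : StrictMono fun j => (u * j - 1) / (u - 1) := by
  intro i j hij
  simp only
  rw [gval hu, gval hu]
  have : (i - 1) / (u - 1) ≤ (j - 1) / (u - 1) := Nat.div_le_div_right (by omega)
  omega

lemma gthresh {u k : ℕ} (hu : 2 ≤ u) (hk : 1 ≤ k) (j : ℕ) :
    k ≤ (u * j - 1) / (u - 1) ↔ k - (k - 1) / u ≤ j := by
  rw [Nat.le_div_iff_mul_le (by omega : 0 < u - 1)]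
  set d := (k - 1) / u with hd
  have hd1 : u * d + (k - 1) % u = k - 1 := Nat.div_add_mod _ _
  have hd2 : (k - 1) % u < u := Nat.mod_lt _ (by omega)
  have hA : 1 ≤ k * (u - 1) := Nat.mul_pos (by omega) (by omega)
  have hku : k * (u - 1) + k * 1 = k * u := by rw [← Nat.mul_add]; congr 1; omega
  have hcomm : k * u = u * k := Nat.mul_comm _ _
  constructor
  · intro h
    by_contra hc
    push_neg at hc
    have h3 : j + d + 1 ≤ k := by omega
    have h4 : u * (j + d + 1) ≤ u * k := Nat.mul_le_mul (le_refl u) h3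
    have h5 : u * (j + d + 1) = u * j + u * d + u := by ring
    omega
  · intro h
    have h3 : k ≤ j + d := by omega
    have h4 : u * k ≤ u * (j + d) := Nat.mul_le_mul (le_refl u) h3
    have h5 : u * (j + d) = u * j + u * d := by ring
    have h6 : k * 1 ≤ k * u := Nat.mul_le_mul (le_refl k) (by omega)
    omega

lemma card_Gset {u : ℕ} (hu : 2 ≤ u) (n : ℕ) : (Gset u n).card = n := by
  rw [Gset, Finset.card_image_of_injOn (fun a _ b _ h => (gmono hu).injective h),
    Nat.card_Icc]
  omega

lemma fiber_card {u n k : ℕ} (hu : 2 ≤ u) (hk1 : 1 ≤ k) (hkn : k ≤ n) :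
    ((Dset u n).filter fun F => F.card = k).card = (n - k + (k - 1) / u).choose (k - 1) := by
  classical
  set gn := (u * n - 1) / (u - 1) with hgn
  have hn1 : 1 ≤ n := le_trans hk1 hkn
  have hgn_mem : gn ∈ Gset u n :=
    Finset.mem_image.2 ⟨n, Finset.mem_Icc.2 ⟨hn1, le_rfl⟩, rfl⟩
  have hgn_ge : n ≤ gn := by rw [hgn, gval hu]; exact Nat.le_add_right n _
  set B := ((Gset u n).filter fun x => k ≤ x).erase gn with hB
  have key : ((Dset u n).filter fun F => F.card = k).card = (B.powersetCard (k - 1)).card := by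
    apply Finset.card_nbij' (fun F => F.erase gn) (fun S => insert gn S)
    · intro F hF
      simp only [Finset.mem_coe, Dset, Finset.mem_filter, Finset.mem_powerset, ← hgn] at hF
      obtain ⟨⟨hsub, hgnF, hall⟩, hcard⟩ := hF
      simp only [Finset.mem_coe, Finset.mem_powersetCard]
      refine ⟨?_, by rw [Finset.card_erase_of_mem hgnF, hcard]⟩
      intro x hx
      rw [Finset.mem_erase] at hx
      rw [hB, Finset.mem_erase]
      exact ⟨hx.1, Finset.mem_filter.2 ⟨hsub hx.2, hcard ▸ hall x hx.2⟩⟩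
    · intro S hS
      rw [Finset.mem_coe, Finset.mem_powersetCard] at hS
      obtain ⟨hSB, hScard⟩ := hS
      have hgnS : gn ∉ S := fun h => (Finset.mem_erase.1 (hSB h)).1 rfl
      have hcard : (insert gn S).card = k := by
        rw [Finset.card_insert_of_notMem hgnS, hScard]; omega
      simp only [Finset.mem_coe, Dset, Finset.mem_filter, Finset.mem_powerset, ← hgn]
      refine ⟨⟨?_, Finset.mem_insert_self _ _, ?_⟩, hcard⟩
      · intro x hx
        rcases Finset.mem_insert.1 hx with rfl | hxS
        · exact hgn_mem
        · exact Finset.mem_of_mem_filter x (Finset.mem_of_mem_erase (hSB hxS))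
      · intro x hx
        rw [hcard]
        rcases Finset.mem_insert.1 hx with rfl | hxS
        · exact le_trans hkn hgn_ge
        · exact (Finset.mem_filter.1 (Finset.mem_of_mem_erase (hSB hxS))).2
    · intro F hF
      simp only [Finset.mem_coe, Dset, Finset.mem_filter, Finset.mem_powerset, ← hgn] at hF
      exact Finset.insert_erase hF.1.2.1
    · intro S hS
      rw [Finset.mem_coe, Finset.mem_powersetCard] at hS
      have hgnS : gn ∉ S := fun h => (Finset.mem_erase.1 (hS.1 h)).1 rfl
      exact Finset.erase_insert hgnS
  rw [key, Finset.card_powersetCard]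
  congr 1
  have hdle : (k - 1) / u ≤ k - 1 := Nat.div_le_self _ _
  have hfilter : ((Gset u n).filter fun x => k ≤ x) =
      (Finset.Icc (k - (k - 1) / u) n).image (fun j => (u * j - 1) / (u - 1)) := by
    rw [Gset, Finset.filter_image]
    congr 1
    ext j
    simp only [Finset.mem_filter, Finset.mem_Icc]
    have ht := gthresh hu hk1 j
    constructor
    · rintro ⟨⟨h1, h2⟩, h3⟩; exact ⟨ht.1 h3, h2⟩
    · rintro ⟨h1, h2⟩
      exact ⟨⟨by omega, h2⟩, ht.2 h1⟩
  have hcount : ((Gset u n).filter fun x => k ≤ x).card = n + 1 - (k - (k - 1) / u) := by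
    rw [hfilter, Finset.card_image_of_injOn (fun a _ b _ h => (gmono hu).injective h),
      Nat.card_Icc]
  have hgnfil : gn ∈ (Gset u n).filter fun x => k ≤ x :=
    Finset.mem_filter.2 ⟨hgn_mem, le_trans hkn hgn_ge⟩
  rw [hB, Finset.card_erase_of_mem hgnfil, hcount]
  generalize hgen : (k - 1) / u = d at hdle ⊢
  omega

end CardDsetAux

open CardDsetAux in
theorem card_Dset_formula (u n : ℕ) (hu : 2 ≤ u) (hn : 1 ≤ n) :
    (Dset u n).card =
      ∑ k ∈ Finset.Icc 1 (((n + 1) * u - 1) / (2 * u - 1)),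
        (n - k + (k - 1) / u).choose (k - 1) := by
  classical
  set K := ((n + 1) * u - 1) / (2 * u - 1) with hK
  have hKn : K ≤ n := by
    have h2 : (n + 1) * u ≤ (n + 1) * (2 * u - 1) :=
      Nat.mul_le_mul (le_refl _) (by omega)
    have h3 : 1 ≤ (n + 1) * u := Nat.mul_pos (by omega) (by omega)
    have h1 : (n + 1) * u - 1 < (n + 1) * (2 * u - 1) := by omega
    have := (Nat.div_lt_iff_lt_mul (by omega : 0 < 2 * u - 1)).2 (by
      calc (n + 1) * u - 1 < (n + 1) * (2 * u - 1) := h1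
        _ = (n + 1) * (2 * u - 1) := rfl)
    omega
  have hfib : (Dset u n).card =
      ∑ k ∈ Finset.Icc 1 n, ((Dset u n).filter fun F => F.card = k).card := by
    apply Finset.card_eq_sum_card_fiberwise
    intro F hF
    simp only [Finset.mem_coe, Dset, Finset.mem_filter, Finset.mem_powerset] at hF
    rw [Finset.mem_coe, Finset.mem_Icc]
    refine ⟨Finset.card_pos.2 ⟨_, hF.2.1⟩, ?_⟩
    calc F.card ≤ (Gset u n).card := Finset.card_le_card hF.1
      _ = n := card_Gset hu n
  have hvanish : ∀ k, 1 ≤ k → k ≤ n → K < k →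
      (n - k + (k - 1) / u).choose (k - 1) = 0 := by
    intro k hk1 hkn hKk
    apply Nat.choose_eq_zero_of_lt
    have h1 : (n + 1) * u - 1 < k * (2 * u - 1) :=
      (Nat.div_lt_iff_lt_mul (by omega : 0 < 2 * u - 1)).1 hKk
    have h3 : 1 ≤ (n + 1) * u := Nat.mul_pos (by omega) (by omega)
    have h2 : (n + 1) * u ≤ k * (2 * u - 1) := by omega
    obtain ⟨d, r, hdr, hru⟩ : ∃ d r, k - 1 = u * d + r ∧ r < u :=
      ⟨(k - 1) / u, (k - 1) % u, (Nat.div_add_mod _ _).symm, Nat.mod_lt _ (by omega)⟩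
    have hdiv : (k - 1) / u = d := by
      rw [hdr, Nat.mul_add_div (by omega : 0 < u), Nat.div_eq_of_lt hru, Nat.add_zero]
    rw [hdiv]
    have hmain : n + d + 2 ≤ 2 * k := by
      by_contra hc
      push_neg at hc
      have h2' : ((n : ℤ) + 1) * u ≤ k * (2 * u - 1) := by
        have h2'' := h2
        zify [show (1 : ℕ) ≤ 2 * u by omega] at h2''
        convert h2'' using 2
      have hdr' : (k : ℤ) - 1 = u * d + r := by
        zify [hk1] at hdr
        exact_mod_cast hdr
      have hru' : (r : ℤ) < u := by exact_mod_cast hru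
      have hu' : (2 : ℤ) ≤ u := by exact_mod_cast hu
      have hc' : (n : ℤ) + d + 1 ≥ 2 * k := by exact_mod_cast Nat.le_of_lt_succ (by omega)
      nlinarith [mul_nonneg (show (0 : ℤ) ≤ u by linarith)
        (show (0 : ℤ) ≤ (n : ℤ) + d + 1 - 2 * k by linarith)]
    omega
  rw [hfib,
    Finset.sum_congr rfl
      (fun k hk => fiber_card hu (Finset.mem_Icc.1 hk).1 (Finset.mem_Icc.1 hk).2)]
  refine (Finset.sum_subset (Finset.Icc_subset_Icc_right hKn) ?_).symm
  intro k hk hk'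
  rw [Finset.mem_Icc] at hk
  have : K < k := by
    by_contra hc
    exact hk' (Finset.mem_Icc.2 ⟨hk.1, by omega⟩)
  exact hvanish k hk.1 hk.2 this
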